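/- arXiv:1208.2683 — 3 statements merged into one kernel-verified Lean document; each statement's English description precedes it below -/
import Mathlib

section
/- The sequence of n-th roots of the n-th harmonic number is strictly decreasing from n = 2 onwards; that is, for every integer n ≥ 2, (H_n)^(1/n) > (H_{n+1})^(1/(n+1)), where H_n = ∑_{k=1}^n 1/k. Equivalently, H_n^(n+1) > H_{n+1}^n for all n ≥ 2. -/
open Finset

lemma aux_key (n : ℕ) (hn : 1 ≤ n) (H : ℝ) (hH : 2 < H) :
    (H + 1 / (n + 1)) ^ n < H ^ (n + 1) := by
  have hn1 : (0:ℝ) < n + 1 := by positivity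
  have hHpos : (0:ℝ) < H := by linarith
  set x : ℝ := 1 / ((n + 1) * H) with hx
  have hx0 : 0 < x := by positivity
  have hxH : x * H = 1 / (n + 1) := by rw [hx]; field_simp
  have hrw : H + 1 / (n + 1) = H * (1 + x) := by
    rw [← hxH]; ring
  have hnx : (n : ℝ) * x < 1 / H := by
    rw [lt_div_iff₀ hHpos]
    calc (n:ℝ) * x * H = n * (x * H) := by ring
    _ = n * (1 / (n+1)) := by rw [hxH]
    _ < 1 := by
        rw [mul_one_div, div_lt_one hn1]; linarith
  have hH1 : 1 / H < 1 / 2 := by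
    apply one_div_lt_one_div_of_lt <;> linarith
  have hx1 : x < 1 := by
    rw [hx, div_lt_one (by nlinarith)]
    nlinarith [Nat.cast_nonneg (α := ℝ) n]
  have hbern : 1 - (n:ℝ) * x ≤ (1 - x) ^ n := by
    have := one_add_mul_le_pow (a := -x) (by linarith) n
    rw [show (1:ℝ) + -x = 1 - x by ring] at this; linarith
  have h1mx : (0:ℝ) < 1 - x := by linarith
  have hnx0 : (0:ℝ) < 1 - (n:ℝ) * x := by
    have : (1:ℝ)/H < 1 := by linarith
    linarith
  have hprod : (1 + x) ^ n * (1 - (n:ℝ) * x) < 1 := by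
    calc (1 + x) ^ n * (1 - (n:ℝ) * x) ≤ (1 + x) ^ n * (1 - x) ^ n := by
          apply mul_le_mul_of_nonneg_left hbern (by positivity)
    _ = (1 - x ^ 2) ^ n := by rw [← mul_pow]; ring_nf
    _ < 1 := pow_lt_one₀ (by nlinarith) (by nlinarith) (by omega)
  have hkey : (1 + x) ^ n < H := by
    have h2 : (1 + x) ^ n < 1 / (1 - (n:ℝ) * x) := by
      rw [lt_div_iff₀ hnx0]; linarith
    have h3 : 1 / (1 - (n:ℝ) * x) < 1 / (1 - 1 / H) := by
      apply one_div_lt_one_div_of_lt <;> linarith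
    have h4 : 1 / (1 - 1 / H) < H := by
      rw [div_lt_iff₀ (by linarith)]
      nlinarith [mul_pos hHpos hHpos]
    linarith
  rw [hrw, mul_pow, pow_succ']
  calc H ^ n * (1 + x) ^ n < H ^ n * H :=
        mul_lt_mul_of_pos_left hkey (by positivity)
  _ = H * H ^ n := by ring

theorem harmonic_nth_root_strict_anti (n : ℕ) (hn : 2 ≤ n) :
    (∑ k ∈ Finset.Icc 1 (n+1), (1 : ℝ) / k) ^ n <
      (∑ k ∈ Finset.Icc 1 n, (1 : ℝ) / k) ^ (n + 1) := by
  have hsum : ∑ k ∈ Finset.Icc 1 (n+1), (1 : ℝ) / k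
      = (∑ k ∈ Finset.Icc 1 n, (1 : ℝ) / k) + 1 / (n + 1) := by
    rw [Finset.sum_Icc_succ_top (by omega)]
    push_cast
    ring
  rcases Nat.lt_or_ge n 4 with h4 | h4
  · interval_cases n
    · norm_num [show Finset.Icc 1 3 = {1,2,3} from rfl,
        show Finset.Icc 1 2 = {1,2} from rfl, Finset.sum_insert]
    · norm_num [show Finset.Icc 1 4 = {1,2,3,4} from rfl,
        show Finset.Icc 1 3 = {1,2,3} from rfl, Finset.sum_insert]
  · rw [hsum]
    apply aux_key n (by omega)
    have hmono : ∑ k ∈ Finset.Icc (1:ℕ) 4, (1:ℝ)/(k:ℝ) ≤ ∑ k ∈ Finset.Icc (1:ℕ) n, (1:ℝ)/(k:ℝ) := by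
      apply Finset.sum_le_sum_of_subset_of_nonneg
      · exact Finset.Icc_subset_Icc_right h4
      · intro i _ _; positivity
    have h25 : ∑ k ∈ Finset.Icc (1:ℕ) 4, (1:ℝ)/(k:ℝ) = 25/12 := by
      norm_num [show Finset.Icc (1:ℕ) 4 = {1,2,3,4} from rfl]
    linarith
end

section
/- For every positive integer m, the sequence ((H_n^{(m)})^(1/n))_{n≥2} is strictly decreasing, i.e., (H_n^{(m)})^(n+1) > (H_{n+1}^{(m)})^n for all n ≥ 2, where H_n^{(m)} = ∑_{k=1}^n 1/k^m. -/
open Finset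

/-- If `0 ≤ x < 1` then `(1 - n*x) * (1+x)^n ≤ 1`. -/
lemma aux_bernoulli_recip (x : ℝ) (n : ℕ) (hx0 : 0 ≤ x) (hx1 : x < 1) :
    (1 - (n : ℝ) * x) * (1 + x) ^ n ≤ 1 := by
  rcases le_or_gt (1 - (n : ℝ) * x) 0 with h | h
  · have : (0:ℝ) ≤ (1 + x) ^ n := by positivity
    nlinarith [mul_nonpos_of_nonpos_of_nonneg h this]
  · have hb : 1 - (n : ℝ) * x ≤ (1 - x) ^ n := by
      have := one_add_mul_le_pow (a := -x) (by linarith) n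
      have e : 1 + (n:ℝ) * (-x) = 1 - (n:ℝ) * x := by ring
      rw [e] at this
      have e2 : (1 + (-x) : ℝ) = 1 - x := by ring
      rwa [e2] at this
    have h2 : (1 - (n : ℝ) * x) * (1 + x) ^ n ≤ (1 - x) ^ n * (1 + x) ^ n :=
      mul_le_mul_of_nonneg_right hb (by positivity)
    have h3 : (1 - x) ^ n * (1 + x) ^ n = (1 - x ^ 2) ^ n := by
      rw [← mul_pow]; ring_nf
    have h4 : (1 - x ^ 2 : ℝ) ^ n ≤ 1 :=
      pow_le_one₀ (by nlinarith) (by nlinarith)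
    calc (1 - (n : ℝ) * x) * (1 + x) ^ n ≤ (1 - x) ^ n * (1 + x) ^ n := h2
      _ = (1 - x ^ 2) ^ n := h3
      _ ≤ 1 := h4

/-- Key inequality: if `n*a < s` with `a, s > 0` then `(1+s+a)^n < (1+s)^(n+1)`. -/
lemma aux_key_s1 (s a : ℝ) (n : ℕ) (ha : 0 < a) (hs : 0 < s) (h : (n : ℝ) * a < s) :
    (1 + s + a) ^ n < (1 + s) ^ (n + 1) := by
  rcases Nat.eq_zero_or_pos n with rfl | hn
  · simpa using by linarith
  have hn1 : (1:ℝ) ≤ (n:ℝ) := by exact_mod_cast hn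
  have h1s : (0:ℝ) < 1 + s := by linarith
  set x : ℝ := a / (1 + s) with hxdef
  have hx0 : 0 < x := div_pos ha h1s
  have hxa : (1 + s) * x = a := by rw [hxdef]; field_simp
  have hna : a ≤ (n : ℝ) * a := by nlinarith
  have hnx : (n : ℝ) * x < 1 := by nlinarith
  have hx1 : x < 1 := by nlinarith
  have hfact : 1 + s + a = (1 + s) * (1 + x) := by
    rw [mul_add, mul_one, hxa]
  have hA := aux_bernoulli_recip x n (le_of_lt hx0) hx1
  have hpos : (0:ℝ) < 1 - (n : ℝ) * x := by linarith
  have h2 : (1 + x) ^ n ≤ 1 / (1 - (n : ℝ) * x) := by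
    rw [le_div_iff₀ hpos]; linarith [mul_comm ((1+x:ℝ)^n) ((1:ℝ) - (n:ℝ)*x)]
  have h3 : 1 / (1 - (n : ℝ) * x) < 1 + s := by
    rw [div_lt_iff₀ hpos]; nlinarith
  calc (1 + s + a) ^ n = (1 + s) ^ n * (1 + x) ^ n := by rw [hfact, mul_pow]
    _ < (1 + s) ^ n * (1 + s) :=
        mul_lt_mul_of_pos_left (lt_of_le_of_lt h2 h3) (by positivity)
    _ = (1 + s) ^ (n + 1) := by ring

lemma aux_split (m n : ℕ) (hn : 1 ≤ n) :
    ∑ k ∈ Finset.Icc 1 n, (1 : ℝ) / (k : ℝ) ^ m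
      = 1 + ∑ k ∈ Finset.Icc 2 n, (1 : ℝ) / (k : ℝ) ^ m := by
  have hset : Finset.Icc 1 n = insert 1 (Finset.Icc 2 n) := by
    ext k; simp only [Finset.mem_Icc, Finset.mem_insert]; omega
  rw [hset, Finset.sum_insert (by simp)]
  norm_num

/-- The counting lemma: `n/(n+1)^m < ∑_{k=2}^n 1/k^m` unless `(m,n) = (1,2)`. -/
lemma aux_count (m n : ℕ) (hm : 1 ≤ m) (hn : 2 ≤ n) (hne : ¬(m = 1 ∧ n = 2)) :
    (n : ℝ) * ((1:ℝ) / ((n:ℝ) + 1) ^ m) < ∑ k ∈ Finset.Icc 2 n, (1 : ℝ) / (k : ℝ) ^ m := by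
  have hn1 : (2:ℝ) ≤ (n:ℝ) := by exact_mod_cast hn
  have hNpos : (0:ℝ) < (n:ℝ) := by linarith
  set N : ℝ := (n : ℝ) with hNdef
  have hP : (0:ℝ) < (N + 1) ^ m := by positivity
  have hQ : (0:ℝ) < N ^ m := by positivity
  have hR : (0:ℝ) < (2:ℝ) ^ m := by positivity
  -- lower bound the sum by 1/2^m + (n-2)/n^m
  have hsum : (1:ℝ) / 2 ^ m + (N - 2) * ((1:ℝ) / N ^ m)
      ≤ ∑ k ∈ Finset.Icc 2 n, (1 : ℝ) / (k : ℝ) ^ m := by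
    have hset : Finset.Icc 2 n = insert 2 (Finset.Icc 3 n) := by
      ext k; simp only [Finset.mem_Icc, Finset.mem_insert]; omega
    rw [hset, Finset.sum_insert (by simp)]
    have hbound : ((Finset.Icc 3 n).card : ℝ) * ((1:ℝ) / N ^ m)
        ≤ ∑ k ∈ Finset.Icc 3 n, (1 : ℝ) / (k : ℝ) ^ m := by
      have := Finset.card_nsmul_le_sum (Finset.Icc 3 n)
        (fun k => (1:ℝ) / (k : ℝ) ^ m) ((1:ℝ) / N ^ m) ?_
      · simpa [nsmul_eq_mul] using this
      · intro k hk
        simp only [Finset.mem_Icc] at hk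
        have hk3 : (3:ℝ) ≤ (k:ℝ) := by exact_mod_cast hk.1
        have hkn : (k:ℝ) ≤ N := by rw [hNdef]; exact_mod_cast hk.2
        have : (k:ℝ) ^ m ≤ N ^ m := pow_le_pow_left₀ (by linarith) hkn m
        have hkpow : (0:ℝ) < (k:ℝ) ^ m := by positivity
        exact one_div_le_one_div_of_le hkpow this
    have hcard : ((Finset.Icc 3 n).card : ℝ) = N - 2 := by
      rw [Nat.card_Icc]
      have : n + 1 - 3 = n - 2 := by omega
      rw [this, hNdef]
      have h2n : (2:ℕ) ≤ n := hn
      push_cast [Nat.cast_sub h2n]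
      ring
    rw [hcard] at hbound
    have h2 : ((2:ℕ):ℝ) ^ m = (2:ℝ) ^ m := by norm_num
    rw [h2]
    linarith
  -- arithmetic part
  set u : ℝ := ((N + 1) / 2) ^ m with hudef
  set v : ℝ := ((N + 1) / N) ^ m with hvdef
  have hu : u * 2 ^ m = (N + 1) ^ m := by
    rw [hudef, ← mul_pow]
    congr 1
    field_simp
  have hv : v * N ^ m = (N + 1) ^ m := by
    rw [hvdef, ← mul_pow]
    congr 1
    field_simp
  have key : N < u + (N - 2) * v := by
    rcases eq_or_lt_of_le hm with hm1 | hm2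
    · -- m = 1
      have hm1' : m = 1 := hm1.symm
      have hn3 : 3 ≤ n := by
        rcases Nat.lt_or_ge n 3 with h | h
        · exfalso; exact hne ⟨hm1', by omega⟩
        · exact h
      have hN3 : (3:ℝ) ≤ N := by rw [hNdef]; exact_mod_cast hn3
      have hNne : N ≠ 0 := by positivity
      rw [hudef, hvdef, hm1', pow_one, pow_one]
      have h2N : (0:ℝ) < 2 * N := by linarith
      rw [show (N+1)/2 + (N-2)*((N+1)/N) = (N*(N+1) + 2*(N-2)*(N+1))/(2*N) by field_simp]
      rw [lt_div_iff₀ h2N]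
      nlinarith
    · -- m ≥ 2
      have hm2' : 2 ≤ m := hm2
      have hu2 : ((N + 1) / 2) ^ 2 ≤ u := by
        rw [hudef]
        exact pow_le_pow_right₀ (by linarith [hn1]) hm2'
      have hv1 : (1:ℝ) ≤ v := by
        rw [hvdef]
        apply one_le_pow₀
        rw [le_div_iff₀ hNpos]; linarith
      nlinarith [sq_nonneg (N - 2)]
  -- convert back to the divided form
  have e1 : (1:ℝ) / 2 ^ m = u / (N + 1) ^ m := by
    rw [div_eq_div_iff hR.ne' hP.ne', one_mul]; exact hu.symm
  have e2 : (1:ℝ) / N ^ m = v / (N + 1) ^ m := by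
    rw [div_eq_div_iff hQ.ne' hP.ne', one_mul]; exact hv.symm
  have main : N * ((1:ℝ) / (N + 1) ^ m) < (1:ℝ) / 2 ^ m + (N - 2) * ((1:ℝ) / N ^ m) := by
    rw [e1, e2, mul_one_div, ← mul_div_assoc, ← add_div]
    gcongr
  exact lt_of_lt_of_le main hsum

theorem harmonic_order_m_nth_root_strict_anti (m : ℕ) (hm : 1 ≤ m) (n : ℕ) (hn : 2 ≤ n) :
    (∑ k ∈ Finset.Icc 1 (n+1), (1 : ℝ) / (k : ℝ) ^ m) ^ n <
      (∑ k ∈ Finset.Icc 1 n, (1 : ℝ) / (k : ℝ) ^ m) ^ (n + 1) := by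
  by_cases hc : m = 1 ∧ n = 2
  · obtain ⟨rfl, rfl⟩ := hc
    rw [show Finset.Icc 1 3 = {1, 2, 3} by decide, show Finset.Icc 1 2 = {1, 2} by decide]
    norm_num
  · have hcount := aux_count m n hm hn hc
    set s : ℝ := ∑ k ∈ Finset.Icc 2 n, (1 : ℝ) / (k : ℝ) ^ m with hsdef
    set a : ℝ := (1:ℝ) / ((n:ℝ) + 1) ^ m with hadef
    have ha : 0 < a := by rw [hadef]; positivity
    have hs : 0 < s := by
      have : (0:ℝ) < (n:ℝ) * a := by
        have : (0:ℝ) < (n:ℝ) := by positivity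
        positivity
      linarith
    rw [aux_split m (n+1) (by omega), aux_split m n (by omega)]
    have hsplit : ∑ k ∈ Finset.Icc 2 (n+1), (1 : ℝ) / (k : ℝ) ^ m = s + a := by
      rw [Finset.sum_Icc_succ_top (by omega : 2 ≤ n + 1)]
      rw [hsdef, hadef]
      push_cast
      ring_nf
    rw [hsplit, ← add_assoc]
    exact aux_key_s1 s a n ha hs hcount
end

section
/- For all n ≥ 0, g_n = ∑_{k=0}^n C(n,k)·f_k, where g_n = ∑_{k=0}^n C(n,k)^2·C(2k,k) and f_k = ∑_{j=0}^k C(k,j)^3 is the k-th Franel number. -/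
open Polynomial Finset

namespace FranelAux

/-- The ambient ring: polynomials in two variables over ℕ. -/
noncomputable abbrev RR : Type := Polynomial (Polynomial ℕ)

/- RR-specialized aliases (generic `rw` fails to unify nested polynomial instances). -/
lemma r_add_pow (x y : RR) (n : ℕ) :
    (x + y) ^ n = ∑ m ∈ range (n + 1), x ^ m * y ^ (n - m) * (n.choose m : RR) :=
  add_pow x y n

lemma r_mul_pow (x y : RR) (n : ℕ) : (x * y) ^ n = x ^ n * y ^ n := mul_pow x y n

lemma r_sum_mul_sum {ι κ : Type*} (s : Finset ι) (t : Finset κ) (f : ι → RR) (g : κ → RR) :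
    (∑ i ∈ s, f i) * ∑ j ∈ t, g j = ∑ i ∈ s, ∑ j ∈ t, f i * g j :=
  Finset.sum_mul_sum s t f g

lemma r_sum_mul {ι : Type*} (s : Finset ι) (f : ι → RR) (x : RR) :
    (∑ i ∈ s, f i) * x = ∑ i ∈ s, f i * x :=
  Finset.sum_mul s f x

lemma r_mul_sum {ι : Type*} (s : Finset ι) (f : ι → RR) (x : RR) :
    x * ∑ i ∈ s, f i = ∑ i ∈ s, x * f i :=
  Finset.mul_sum s f x

lemma r_one_pow (n : ℕ) : (1 : RR) ^ n = 1 := one_pow n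

lemma r_mul_one (x : RR) : x * 1 = x := mul_one x

noncomputable def μ (a b : ℕ) : RR := X ^ a * C (X ^ b)

lemma μ_mul (a b c d : ℕ) : μ a b * μ c d = μ (a + c) (b + d) := by
  simp only [μ, pow_add, map_mul]; ring

lemma μ_pow (a b k : ℕ) : μ a b ^ k = μ (a * k) (b * k) := by
  have h2 : (C (X ^ b : Polynomial ℕ) : RR) ^ k = C (X ^ (b * k)) := by
    rw [← map_pow, ← pow_mul]
  unfold μ
  rw [mul_pow ((X : RR) ^ a) (C (X ^ b)) k, ← pow_mul, h2]

lemma μ_zero_zero : μ 0 0 = 1 := by simp [μ]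

/-- Extract the coefficient of X^m * Y^m. -/
noncomputable def ψ (m : ℕ) (p : RR) : ℕ := (p.coeff m).coeff m

lemma ψ_sum {ι : Type*} (m : ℕ) (s : Finset ι) (f : ι → RR) :
    ψ m (∑ i ∈ s, f i) = ∑ i ∈ s, ψ m (f i) := by
  unfold ψ
  rw [finset_sum_coeff, finset_sum_coeff]

lemma ψ_natCast_mul (m c : ℕ) (p : RR) : ψ m (p * (c : RR)) = ψ m p * c := by
  have h : p * (c : RR) = c • p := by
    rw [nsmul_eq_mul c p]
    exact mul_comm p (c : RR)
  rw [h]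
  unfold ψ
  rw [coeff_smul, coeff_smul, smul_eq_mul]
  exact mul_comm c _

lemma ψ_μ (m a b : ℕ) : ψ m (μ a b) = if a = m ∧ b = m then 1 else 0 := by
  unfold ψ μ
  rw [mul_comm ((X : RR) ^ a) (C (X ^ b)), coeff_C_mul, coeff_X_pow]
  by_cases ha : m = a
  · by_cases hb : m = b
    · rw [if_pos ha, mul_one, coeff_X_pow, if_pos hb, if_pos ⟨ha.symm, hb.symm⟩]
    · rw [if_pos ha, mul_one, coeff_X_pow, if_neg hb, if_neg (by omega)]
  · rw [if_neg ha, mul_zero, coeff_zero, if_neg (by omega)]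

/-- Canonical term: a monomial with a natural-number coefficient. -/
noncomputable def T (a b c : ℕ) : RR := μ a b * (c : RR)

lemma ψ_T (m a b c : ℕ) : ψ m (T a b c) = if a = m ∧ b = m then c else 0 := by
  rw [T, ψ_natCast_mul, ψ_μ]
  split_ifs <;> simp

lemma r_cast_mul (c c' : ℕ) : ((c * c' : ℕ) : RR) = (c : RR) * (c' : RR) := by push_cast; ring

lemma T_mul (a b c a' b' c' : ℕ) :
    T a b c * T a' b' c' = T (a + a') (b + b') (c * c') := by
  unfold T
  rw [mul_mul_mul_comm (μ a b) ((c : RR)) (μ a' b') ((c' : RR)), μ_mul, r_cast_mul]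

lemma T_mul_μ (a b c a' b' : ℕ) :
    T a b c * μ a' b' = T (a + a') (b + b') c := by
  unfold T
  rw [mul_right_comm (μ a b) ((c : RR)) (μ a' b'), μ_mul]

lemma T_mul_cast (a b c c' : ℕ) : T a b c * (c' : RR) = T a b (c * c') := by
  unfold T
  rw [mul_assoc (μ a b) ((c : RR)) ((c' : RR)), r_cast_mul]

lemma ψ_shift (m d : ℕ) (hd : d ≤ m) (q : RR) : ψ m (μ d d * q) = ψ (m - d) q := by
  have h : μ d d * q = X ^ d * (C (X ^ d) * q) := by
    unfold μ; rw [mul_assoc ((X : RR) ^ d) (C (X ^ d)) q]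
  unfold ψ
  rw [h, coeff_X_pow_mul' (C (X ^ d) * q) d m, if_pos hd, coeff_C_mul,
    coeff_X_pow_mul' (q.coeff (m - d)) d m, if_pos hd]

lemma exp_x (k : ℕ) :
    (1 + μ 1 0) ^ k = ∑ a ∈ range (k + 1), T a 0 (k.choose a) := by
  rw [add_comm (1 : RR) (μ 1 0), ← μ_zero_zero, r_add_pow]
  refine sum_congr rfl fun m _ => ?_
  rw [μ_pow, μ_pow, μ_mul]
  unfold T
  norm_num

lemma exp_y (k : ℕ) :
    (1 + μ 0 1) ^ k = ∑ b ∈ range (k + 1), T 0 b (k.choose b) := by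
  rw [add_comm (1 : RR) (μ 0 1), ← μ_zero_zero, r_add_pow]
  refine sum_congr rfl fun m _ => ?_
  rw [μ_pow, μ_pow, μ_mul]
  unfold T
  norm_num

lemma exp_xy (k : ℕ) :
    (μ 1 0 + μ 0 1) ^ k = ∑ c ∈ range (k + 1), T c (k - c) (k.choose c) := by
  rw [r_add_pow]
  refine sum_congr rfl fun m _ => ?_
  rw [μ_pow, μ_pow, μ_mul]
  unfold T
  norm_num

/-- The polynomial (1+X)(1+Y)(X+Y). -/
noncomputable def P : RR := (1 + μ 1 0) * (1 + μ 0 1) * (μ 1 0 + μ 0 1)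

lemma P_pow (k : ℕ) :
    P ^ k = ∑ a ∈ range (k + 1), ∑ b ∈ range (k + 1), ∑ c ∈ range (k + 1),
      T (a + c) (b + (k - c)) (k.choose a * k.choose b * k.choose c) := by
  rw [P, r_mul_pow, r_mul_pow, exp_x, exp_y, exp_xy, r_sum_mul_sum, r_sum_mul]
  refine sum_congr rfl fun a _ => ?_
  rw [r_sum_mul]
  refine sum_congr rfl fun b _ => ?_
  rw [T_mul, r_mul_sum]
  refine sum_congr rfl fun c _ => ?_
  rw [T_mul]
  norm_num

lemma central (N : ℕ) :
    ∑ i ∈ range (N + 1), N.choose i * N.choose (N - i) = (2 * N).choose N := by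
  rw [two_mul, Nat.add_choose_eq, Finset.Nat.sum_antidiagonal_eq_sum_range_succ_mk]

lemma franel (k : ℕ) :
    ψ k (P ^ k) = ∑ j ∈ range (k + 1), k.choose j ^ 3 := by
  rw [P_pow, ψ_sum]
  refine sum_congr rfl fun a ha => ?_
  rw [ψ_sum]
  rw [mem_range] at ha
  have ha' : a ≤ k := by omega
  rw [Finset.sum_eq_single (k - a)]
  · rw [ψ_sum, Finset.sum_eq_single (k - a)]
    · rw [ψ_T, if_pos ⟨by omega, by omega⟩, Nat.choose_symm ha']
      ring
    · intro c hc hne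
      rw [mem_range] at hc
      rw [ψ_T, if_neg (by omega)]
    · intro h
      exact absurd (mem_range.2 (by omega)) h
  · intro b hb hne
    rw [mem_range] at hb
    rw [ψ_sum]
    refine Finset.sum_eq_zero fun c hc => ?_
    rw [mem_range] at hc
    rw [ψ_T, if_neg (by omega)]
  · intro h
    exact absurd (mem_range.2 (by omega)) h

/-- The polynomial X+Y+XY. -/
noncomputable def A : RR := μ 1 0 + μ 0 1 + μ 1 1

/-- The polynomial 1+X+Y. -/
noncomputable def B : RR := 1 + μ 1 0 + μ 0 1

lemma A_pow (n : ℕ) :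
    A ^ n = ∑ c ∈ range (n + 1), ∑ i ∈ range (c + 1),
      T (i + (n - c)) ((c - i) + (n - c)) (c.choose i * n.choose c) := by
  rw [A, r_add_pow]
  refine sum_congr rfl fun c _ => ?_
  rw [exp_xy, μ_pow, r_sum_mul, r_sum_mul]
  refine sum_congr rfl fun i _ => ?_
  rw [one_mul (n - c), T_mul_μ, T_mul_cast]

lemma B_pow (n : ℕ) :
    B ^ n = ∑ c ∈ range (n + 1), ∑ i ∈ range (c + 1),
      T i (c - i) (c.choose i * n.choose c) := by
  have hB : B = (μ 1 0 + μ 0 1) + 1 := by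
    rw [B, add_comm (1 : RR) (μ 1 0), add_assoc, add_comm (1 : RR) (μ 0 1), ← add_assoc]
  rw [hB, r_add_pow]
  refine sum_congr rfl fun c _ => ?_
  rw [exp_xy, r_one_pow, r_mul_one, r_sum_mul]
  refine sum_congr rfl fun i _ => ?_
  rw [T_mul_cast]

lemma L2 (n : ℕ) :
    ψ n (A ^ n * B ^ n) =
      ∑ c ∈ range (n + 1), n.choose c ^ 2 * (2 * c).choose c := by
  rw [A_pow, B_pow, r_sum_mul_sum, ψ_sum]
  refine sum_congr rfl fun c hc => ?_
  rw [mem_range] at hc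
  have hc' : c ≤ n := by omega
  rw [ψ_sum, Finset.sum_eq_single c]
  · rw [r_sum_mul_sum, ψ_sum]
    have key : ∀ i ∈ range (c + 1),
        ψ n (∑ i' ∈ range (c + 1),
          T (i + (n - c)) ((c - i) + (n - c)) (c.choose i * n.choose c) *
            T i' (c - i') (c.choose i' * n.choose c)) =
          n.choose c ^ 2 * (c.choose i * c.choose (c - i)) := by
      intro i hi
      rw [mem_range] at hi
      rw [ψ_sum, Finset.sum_eq_single (c - i)]
      · rw [T_mul, ψ_T, if_pos ⟨by omega, by omega⟩]
        ring
      · intro i' hi' hne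
        rw [mem_range] at hi'
        rw [T_mul, ψ_T, if_neg (by omega)]
      · intro h
        exact absurd (mem_range.2 (by omega)) h
    rw [sum_congr rfl key, ← mul_sum, central]
  · intro c' hc'' hne
    rw [mem_range] at hc''
    rw [r_sum_mul_sum, ψ_sum]
    refine Finset.sum_eq_zero fun i hi => ?_
    rw [mem_range] at hi
    rw [ψ_sum]
    refine Finset.sum_eq_zero fun i' hi' => ?_
    rw [mem_range] at hi'
    rw [T_mul, ψ_T, if_neg (by omega)]
  · intro h
    exact absurd (mem_range.2 (by omega)) h

lemma factorization : A * B = P + μ 1 1 := by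
  simp only [A, B, P, μ, pow_zero, pow_one, C_1, one_mul, mul_one, map_one]
  ring

lemma L1 (n : ℕ) :
    ψ n ((P + μ 1 1) ^ n) =
      ∑ k ∈ range (n + 1), n.choose k * ∑ j ∈ range (k + 1), k.choose j ^ 3 := by
  rw [r_add_pow, ψ_sum]
  refine sum_congr rfl fun k hk => ?_
  rw [mem_range] at hk
  have hk' : k ≤ n := by omega
  rw [μ_pow]
  have h1 : P ^ k * μ (1 * (n - k)) (1 * (n - k)) = μ (n - k) (n - k) * P ^ k := by
    rw [one_mul (n - k)]
    exact mul_comm (P ^ k) (μ (n - k) (n - k))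
  rw [h1, ψ_natCast_mul, ψ_shift n (n - k) (by omega)]
  have h2 : n - (n - k) = k := by omega
  rw [h2, franel, mul_comm]

end FranelAux

theorem g_eq_binomial_transform_of_franel (n : ℕ) :
    (∑ k ∈ Finset.range (n+1), (n.choose k)^2 * (2*k).choose k) =
      ∑ k ∈ Finset.range (n+1),
        n.choose k * (∑ j ∈ Finset.range (k+1), (k.choose j)^3) := by
  rw [← FranelAux.L2 n, ← FranelAux.L1 n, ← FranelAux.r_mul_pow, FranelAux.factorization]
end
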